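/- arXiv:0902.0722 — 3 statements merged into one kernel-verified Lean document; each statement's English description precedes it below -/
import Mathlib

section
/- Let N ≥ 3, ρ₀ > 0, β > 0, κ > 0, and define W : {x ∈ ℝ^N : |x| > ρ₀} → ℝ by W(x) = |x|^{−(N−2)} ((N−2)β − κ (log(|x|/ρ₀))^{−β}). Then W is of class C² and for every x with |x| > ρ₀ one has −ΔW(x) = κ(N−2)β / (|x|^N (log(|x|/ρ₀))^{1+β}) + κβ(β+1) / (|x|^N (log(|x|/ρ₀))^{2+β}). In particular, if Λ ⊂ ℝ^N is a bounded open set containing the closed ball of radius ρ centered at 0 with ρ > ρ₀, and H is the penalization potential, then −ΔW(x) ≥ H(x)W(x) for every x ∉ Λ, i.e. W is a supersolution of −Δ − H outside Λ. -/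
open MeasureTheory Metric Set Filter
open scoped RealInnerProductSpace Topology ENNReal

/-- The Laplacian of `u : ℝ^N → ℝ`: the sum of the second partial derivatives. -/
noncomputable def lap {N : ℕ} (u : EuclideanSpace ℝ (Fin N) → ℝ)
    (x : EuclideanSpace ℝ (Fin N)) : ℝ :=
  ∑ i : Fin N, iteratedFDeriv ℝ 2 u x ![EuclideanSpace.single i 1, EuclideanSpace.single i 1]

open Classical in
/-- The penalization potential: `H(x) = κ / (|x|² (log(|x|/ρ₀))^{1+β})` outside `Λ`
and `H(x) = 0` on `Λ`. -/
noncomputable def penalPot {N : ℕ} (Λ : Set (EuclideanSpace ℝ (Fin N))) (ρ₀ β κ : ℝ)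
    (x : EuclideanSpace ℝ (Fin N)) : ℝ :=
  if x ∈ Λ then 0 else κ / (‖x‖ ^ 2 * Real.log (‖x‖ / ρ₀) ^ (1 + β))

/-! ### Auxiliary one-dimensional functions -/

noncomputable section MyAux
def auxL (ρ₀ s : ℝ) : ℝ := Real.log s / 2 - Real.log ρ₀
def auxA (ρ₀ β κ c s : ℝ) : ℝ :=
  (-c/2) * (c*β - κ * auxL ρ₀ s ^ (-β)) + (κ*β/2) * auxL ρ₀ s ^ (-β-1)
def auxPhi (ρ₀ β κ c s : ℝ) : ℝ := s ^ (-c/2) * (c*β - κ * auxL ρ₀ s ^ (-β))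
def auxPsi (ρ₀ β κ c s : ℝ) : ℝ := s ^ (-c/2-1) * auxA ρ₀ β κ c s
def auxAd (ρ₀ β κ c s : ℝ) : ℝ :=
  (-c/2) * (κ*β * auxL ρ₀ s ^ (-β-1) / (2*s))
    - (κ*β/2) * ((β+1) * auxL ρ₀ s ^ (-β-2) / (2*s))
def auxPsid (ρ₀ β κ c s : ℝ) : ℝ :=
  (-c/2-1) * s ^ (-c/2-2) * auxA ρ₀ β κ c s + s ^ (-c/2-1) * auxAd ρ₀ β κ c s
end MyAux

lemma auxL_pos {ρ₀ s : ℝ} (hρ₀ : 0 < ρ₀) (hs : ρ₀^2 < s) : 0 < auxL ρ₀ s := by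
  have h : Real.log (ρ₀^2) < Real.log s := Real.log_lt_log (by positivity) hs
  rw [Real.log_pow] at h
  unfold auxL
  push_cast at h
  linarith

lemma auxL_hasDerivAt {ρ₀ s : ℝ} (hs : s ≠ 0) : HasDerivAt (auxL ρ₀) (1/(2*s)) s := by
  have h := ((Real.hasDerivAt_log hs).div_const 2).sub_const (Real.log ρ₀)
  have e : (1:ℝ)/(2*s) = s⁻¹/2 := by rw [one_div, mul_inv, inv_eq_one_div 2]; ring
  rw [e]; exact h

lemma auxPhi_hasDerivAt {ρ₀ β κ c s : ℝ} (hρ₀ : 0 < ρ₀) (hs : ρ₀^2 < s) :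
    HasDerivAt (auxPhi ρ₀ β κ c) (auxPsi ρ₀ β κ c s) s := by
  have hs0 : 0 < s := lt_trans (by positivity) hs
  have hL : 0 < auxL ρ₀ s := auxL_pos hρ₀ hs
  have h1 : HasDerivAt (fun u : ℝ => u ^ (-c/2)) ((-c/2) * s ^ (-c/2 - 1)) s :=
    Real.hasDerivAt_rpow_const (Or.inl hs0.ne')
  have h2 : HasDerivAt (fun u => auxL ρ₀ u ^ (-β))
      ((1/(2*s)) * (-β) * auxL ρ₀ s ^ (-β - 1)) s :=
    (auxL_hasDerivAt hs0.ne').rpow_const (Or.inl hL.ne')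
  have h3 := (h2.const_mul κ).const_sub (c*β)
  have h := h1.mul h3
  refine h.congr_deriv ?_
  symm
  unfold auxPsi auxA
  rw [show (-c/2-1 : ℝ) = -c/2 - 1 by ring, Real.rpow_sub_one hs0.ne',
    show (-β-1 : ℝ) = -β - 1 by ring, Real.rpow_sub_one hL.ne']
  field_simp

lemma auxPsi_hasDerivAt {ρ₀ β κ c s : ℝ} (hρ₀ : 0 < ρ₀) (hs : ρ₀^2 < s) :
    HasDerivAt (auxPsi ρ₀ β κ c) (auxPsid ρ₀ β κ c s) s := by
  have hs0 : 0 < s := lt_trans (by positivity) hs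
  have hL : 0 < auxL ρ₀ s := auxL_pos hρ₀ hs
  have h1 : HasDerivAt (fun u : ℝ => u ^ (-c/2-1)) ((-c/2-1) * s ^ (-c/2-1 - 1)) s :=
    Real.hasDerivAt_rpow_const (Or.inl hs0.ne')
  have h2 : HasDerivAt (fun u => auxL ρ₀ u ^ (-β))
      ((1/(2*s)) * (-β) * auxL ρ₀ s ^ (-β - 1)) s :=
    (auxL_hasDerivAt hs0.ne').rpow_const (Or.inl hL.ne')
  have h2' : HasDerivAt (fun u => auxL ρ₀ u ^ (-β-1))
      ((1/(2*s)) * (-β-1) * auxL ρ₀ s ^ (-β-1 - 1)) s :=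
    (auxL_hasDerivAt hs0.ne').rpow_const (Or.inl hL.ne')
  have hA : HasDerivAt (auxA ρ₀ β κ c)
      ((-c/2) * -(κ * ((1/(2*s)) * (-β) * auxL ρ₀ s ^ (-β - 1)))
        + (κ*β/2) * ((1/(2*s)) * (-β-1) * auxL ρ₀ s ^ (-β-1 - 1))) s := by
    have h3 := (h2.const_mul κ).const_sub (c*β)
    exact (h3.const_mul (-c/2)).add (h2'.const_mul (κ*β/2))
  have h := h1.mul hA
  refine h.congr_deriv ?_
  symm
  unfold auxPsid auxAd auxA
  rw [show (-c/2-2 : ℝ) = (-c/2-1) - 1 by ring, Real.rpow_sub_one hs0.ne',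
    show (-β-2 : ℝ) = (-β-1) - 1 by ring, Real.rpow_sub_one hL.ne']
  field_simp
  ring

/-! ### The inner product as a continuous bilinear map on Euclidean space -/

noncomputable def auxB (N : ℕ) : EuclideanSpace ℝ (Fin N) →L[ℝ]
    EuclideanSpace ℝ (Fin N) →L[ℝ] ℝ :=
  ∑ i : Fin N, (EuclideanSpace.proj i).smulRight (EuclideanSpace.proj (𝕜 := ℝ) i)

variable {N : ℕ}

lemma auxB_apply (y v : EuclideanSpace ℝ (Fin N)) : auxB N y v = ∑ i, y i * v i := by
  simp [auxB, ContinuousLinearMap.sum_apply, mul_comm]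

lemma auxB_eq_inner (y v : EuclideanSpace ℝ (Fin N)) : auxB N y v = ⟪y, v⟫ := by
  rw [auxB_apply]
  simp [PiLp.inner_apply, RCLike.inner_apply, mul_comm]

lemma auxB_self (x : EuclideanSpace ℝ (Fin N)) : auxB N x x = ‖x‖ ^ 2 := by
  rw [auxB_eq_inner, real_inner_self_eq_norm_sq]

/-! ### The Laplacian of a radial function -/

lemma lap_radial (φ ψ : ℝ → ℝ) {U : Set ℝ} (hU : IsOpen U)
    (hφψ : ∀ s ∈ U, HasDerivAt φ (ψ s) s)
    {W : EuclideanSpace ℝ (Fin N) → ℝ} {x : EuclideanSpace ℝ (Fin N)}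
    (hx : ‖x‖ ^ 2 ∈ U)
    (hWφ : ∀ᶠ y in 𝓝 x, W y = φ (‖y‖ ^ 2))
    {ψ' : ℝ} (hψ : HasDerivAt ψ ψ' (‖x‖ ^ 2)) :
    lap W x = 4 * ψ' * ‖x‖ ^ 2 + 2 * N * ψ (‖x‖ ^ 2) := by
  set F : EuclideanSpace ℝ (Fin N) → (EuclideanSpace ℝ (Fin N) →L[ℝ] ℝ) :=
    fun y => (2 * ψ (‖y‖ ^ 2)) • auxB N y with hF_def
  have hq : ∀ y : EuclideanSpace ℝ (Fin N),
      HasFDerivAt (fun z : EuclideanSpace ℝ (Fin N) => ‖z‖ ^ 2) (2 • auxB N y) y := by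
    intro y
    have h := (hasStrictFDerivAt_norm_sq y).hasFDerivAt
    refine h.congr_fderiv ?_
    symm
    ext v
    simp [auxB_eq_inner]
  have hV : ∀ y : EuclideanSpace ℝ (Fin N), ‖y‖ ^ 2 ∈ U →
      W =ᶠ[𝓝 y] (fun z => φ (‖z‖ ^ 2)) → HasFDerivAt W (F y) y := by
    intro y hy hWy
    have h := (hφψ _ hy).comp_hasFDerivAt y (hq y)
    have h' : HasFDerivAt W (ψ (‖y‖ ^ 2) • (2 • auxB N y)) y :=
      h.congr_of_eventuallyEq hWy
    convert h' using 1
    ext v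
    simp [hF_def]
    ring
  have hmemU : ∀ᶠ y in 𝓝 x, ‖y‖ ^ 2 ∈ U := by
    have hcont : ContinuousAt (fun y : EuclideanSpace ℝ (Fin N) => ‖y‖ ^ 2) x := by fun_prop
    exact hcont.eventually_mem (hU.mem_nhds hx)
  have hWev : ∀ᶠ y in 𝓝 x, W =ᶠ[𝓝 y] (fun z => φ (‖z‖ ^ 2)) :=
    hWφ.eventually_nhds
  have hfd : fderiv ℝ W =ᶠ[𝓝 x] F := by
    filter_upwards [hmemU, hWev] with y hy hWy
    exact (hV y hy hWy).fderiv
  have hc : HasFDerivAt (fun y : EuclideanSpace ℝ (Fin N) => 2 * ψ (‖y‖ ^ 2))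
      ((4 * ψ') • auxB N x) x := by
    have h := ((hψ.comp_hasFDerivAt x (hq x)).const_mul 2)
    refine h.congr_fderiv ?_
    symm
    ext v
    simp
    ring
  have hB : HasFDerivAt (fun y : EuclideanSpace ℝ (Fin N) => auxB N y) (auxB N) x :=
    (auxB N).hasFDerivAt
  have hF : HasFDerivAt F ((2 * ψ (‖x‖ ^ 2)) • auxB N
      + (((4 * ψ') • auxB N x).smulRight (auxB N x))) x := hc.smul hB
  have h2 : fderiv ℝ (fderiv ℝ W) x = (2 * ψ (‖x‖ ^ 2)) • auxB N
      + (((4 * ψ') • auxB N x).smulRight (auxB N x)) := by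
    rw [hfd.fderiv_eq]
    exact hF.fderiv
  unfold lap
  have hterm : ∀ i : Fin N,
      iteratedFDeriv ℝ 2 W x ![EuclideanSpace.single i 1, EuclideanSpace.single i 1]
        = 2 * ψ (‖x‖ ^ 2) * (auxB N (EuclideanSpace.single i 1) (EuclideanSpace.single i 1))
          + 4 * ψ' * (auxB N x (EuclideanSpace.single i 1))
            * (auxB N x (EuclideanSpace.single i 1)) := by
    intro i
    rw [iteratedFDeriv_two_apply, h2]
    simp [ContinuousLinearMap.smulRight_apply]
    try ring
  have hB1 : ∀ i : Fin N,
      auxB N (EuclideanSpace.single i 1) (EuclideanSpace.single i 1) = 1 := by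
    intro i
    rw [auxB_apply]
    simp [EuclideanSpace.single_apply]
  have hBx : ∀ i : Fin N, auxB N x (EuclideanSpace.single i 1) = x i := by
    intro i
    rw [auxB_apply]
    simp [EuclideanSpace.single_apply]
  have hsum : ∑ i : Fin N, x i * x i = ‖x‖ ^ 2 := by
    rw [← auxB_self, auxB_apply]
  have hterm2 : ∀ i : Fin N,
      iteratedFDeriv ℝ 2 W x ![EuclideanSpace.single i 1, EuclideanSpace.single i 1]
        = 2 * ψ (‖x‖ ^ 2) + 4 * ψ' * (x i * x i) := by
    intro i
    rw [hterm i, hB1 i, hBx i]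
    ring
  rw [Finset.sum_congr rfl (fun i _ => hterm2 i), Finset.sum_add_distrib,
    Finset.sum_const, ← Finset.mul_sum, hsum]
  simp [Finset.card_univ]
  ring

/-! ### Algebraic identities -/

lemma sq_rpow {r : ℝ} (hr : 0 < r) (e : ℝ) : (r^2 : ℝ) ^ e = r ^ (2*e) := by
  rw [← Real.rpow_natCast r 2, ← Real.rpow_mul hr.le]
  norm_num

lemma auxL_sq {ρ₀ r : ℝ} (hρ₀ : 0 < ρ₀) (hr : 0 < r) :
    auxL ρ₀ (r^2) = Real.log (r/ρ₀) := by
  unfold auxL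
  rw [Real.log_pow, Real.log_div hr.ne' hρ₀.ne']
  push_cast
  ring

lemma auxPhi_sq {ρ₀ β κ c r : ℝ} (hρ₀ : 0 < ρ₀) (hr : 0 < r) :
    auxPhi ρ₀ β κ c (r^2) = r ^ (-c) * (c*β - κ * Real.log (r/ρ₀) ^ (-β)) := by
  unfold auxPhi
  rw [auxL_sq hρ₀ hr, sq_rpow hr, show (2*(-c/2) : ℝ) = -c by ring]

lemma final_alg {ρ₀ β κ c r : ℝ} (hρ₀ : 0 < ρ₀) (hr : ρ₀ < r) :
    -(4 * auxPsid ρ₀ β κ c (r^2) * (r^2) + 2*(c+2) * auxPsi ρ₀ β κ c (r^2))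
      = κ*c*β / (r ^ (c+2) * Real.log (r/ρ₀) ^ (1+β))
        + κ*β*(β+1) / (r ^ (c+2) * Real.log (r/ρ₀) ^ (2+β)) := by
  have hr0 : 0 < r := hρ₀.trans hr
  set ℓ := Real.log (r/ρ₀) with hℓdef
  have hℓ : 0 < ℓ := Real.log_pos (by rw [lt_div_iff₀ hρ₀]; linarith)
  have hrc : 0 < r ^ (c : ℝ) := Real.rpow_pos_of_pos hr0 c
  have hw : 0 < ℓ ^ (β : ℝ) := Real.rpow_pos_of_pos hℓ β
  unfold auxPsid auxPsi auxAd auxA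
  rw [auxL_sq hρ₀ hr0, ← hℓdef]
  rw [sq_rpow hr0 (-c/2-1), sq_rpow hr0 (-c/2-2),
    show (2*(-c/2-1) : ℝ) = -(c+2) by ring, show (2*(-c/2-2) : ℝ) = -(c+4) by ring,
    show ((-β-1) : ℝ) = -(β+1) by ring, show ((-β-2) : ℝ) = -(β+2) by ring,
    Real.rpow_neg hr0.le (c+2), Real.rpow_neg hr0.le (c+4),
    Real.rpow_neg hℓ.le β, Real.rpow_neg hℓ.le (β+1), Real.rpow_neg hℓ.le (β+2),
    Real.rpow_add hr0 c 2, Real.rpow_add hr0 c 4,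
    Real.rpow_add hℓ β 1, Real.rpow_add hℓ β 2,
    Real.rpow_add hℓ 1 β, Real.rpow_add hℓ 2 β,
    Real.rpow_two, Real.rpow_one,
    show ((4:ℝ)) = ((2:ℕ):ℝ) + ((2:ℕ):ℝ) by norm_num,
    Real.rpow_add hr0, Real.rpow_natCast]
  field_simp
  ring

theorem stmt10 (N : ℕ) (hN : 3 ≤ N)
    (ρ₀ β κ : ℝ) (hρ₀ : 0 < ρ₀) (hβ : 0 < β) (hκ : 0 < κ)
    (W : EuclideanSpace ℝ (Fin N) → ℝ)
    (hW : ∀ x : EuclideanSpace ℝ (Fin N), ρ₀ < ‖x‖ →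
      W x = ‖x‖ ^ (-((N : ℝ) - 2)) *
        (((N : ℝ) - 2) * β - κ * Real.log (‖x‖ / ρ₀) ^ (-β))) :
    ContDiffOn ℝ 2 W {x : EuclideanSpace ℝ (Fin N) | ρ₀ < ‖x‖} ∧
    (∀ x : EuclideanSpace ℝ (Fin N), ρ₀ < ‖x‖ →
      -lap W x =
        κ * ((N : ℝ) - 2) * β / (‖x‖ ^ N * Real.log (‖x‖ / ρ₀) ^ (1 + β)) +
          κ * β * (β + 1) / (‖x‖ ^ N * Real.log (‖x‖ / ρ₀) ^ (2 + β))) ∧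
    (∀ (Λ : Set (EuclideanSpace ℝ (Fin N))) (ρ : ℝ), IsOpen Λ →
      Bornology.IsBounded Λ → ρ₀ < ρ → Metric.closedBall 0 ρ ⊆ Λ →
      ∀ x ∉ Λ, penalPot Λ ρ₀ β κ x * W x ≤ -lap W x) := by
  set c : ℝ := (N : ℝ) - 2 with hc_def
  have hN3 : (3 : ℝ) ≤ (N : ℝ) := by exact_mod_cast hN
  have hc : 0 < c := by rw [hc_def]; linarith
  have hNc : ((N : ℝ)) = c + 2 := by rw [hc_def]; ring
  have hO : IsOpen {x : EuclideanSpace ℝ (Fin N) | ρ₀ < ‖x‖} :=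
    isOpen_lt continuous_const continuous_norm
  -- W agrees with the radial profile near every point of the region
  have hWev : ∀ x : EuclideanSpace ℝ (Fin N), ρ₀ < ‖x‖ →
      W =ᶠ[𝓝 x] fun y => auxPhi ρ₀ β κ c (‖y‖ ^ 2) := by
    intro x hx
    filter_upwards [hO.mem_nhds hx] with y hy
    have hy0 : 0 < ‖y‖ := hρ₀.trans hy
    rw [hW y hy, auxPhi_sq hρ₀ hy0]
  have hsq : ∀ x : EuclideanSpace ℝ (Fin N), ρ₀ < ‖x‖ → ρ₀^2 < ‖x‖^2 := by
    intro x hx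
    nlinarith [hρ₀, hx]
  -- Part 2: value of the Laplacian
  have part2 : ∀ x : EuclideanSpace ℝ (Fin N), ρ₀ < ‖x‖ →
      -lap W x =
        κ * c * β / (‖x‖ ^ N * Real.log (‖x‖ / ρ₀) ^ (1 + β)) +
          κ * β * (β + 1) / (‖x‖ ^ N * Real.log (‖x‖ / ρ₀) ^ (2 + β)) := by
    intro x hx
    have hx2 : ‖x‖ ^ 2 ∈ Ioi (ρ₀^2) := hsq x hx
    have hlap := lap_radial (auxPhi ρ₀ β κ c) (auxPsi ρ₀ β κ c) isOpen_Ioi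
      (fun s hs => auxPhi_hasDerivAt hρ₀ hs) hx2 (hWev x hx)
      (auxPsi_hasDerivAt hρ₀ hx2)
    rw [hlap, hNc, ← Real.rpow_natCast ‖x‖ N, hNc]
    exact final_alg hρ₀ hx
  refine ⟨?_, part2, ?_⟩
  · -- Part 1: regularity
    intro x hx
    have hx0 : 0 < ‖x‖ := hρ₀.trans hx
    have hs2 : (0:ℝ) < ‖x‖ ^ 2 := by positivity
    have hL : 0 < auxL ρ₀ (‖x‖^2) := auxL_pos hρ₀ (hsq x hx)
    have hφ : ContDiffAt ℝ 2 (auxPhi ρ₀ β κ c) (‖x‖ ^ 2) := by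
      unfold auxPhi auxL
      apply ContDiffAt.mul
      · exact Real.contDiffAt_rpow_const_of_ne hs2.ne'
      · refine contDiffAt_const.sub (contDiffAt_const.mul ?_)
        refine ContDiffAt.rpow_const_of_ne ?_ ?_
        · exact ((Real.contDiffAt_log.2 hs2.ne').div_const 2).sub contDiffAt_const
        · exact hL.ne'
    have hn : ContDiffAt ℝ 2 (fun y : EuclideanSpace ℝ (Fin N) => ‖y‖ ^ 2) x :=
      (contDiff_norm_sq ℝ).contDiffAt
    exact ((hφ.comp x hn).congr_of_eventuallyEq (hWev x hx)).contDiffWithinAt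
  · -- Part 3: supersolution property
    intro Λ ρ hΛo hΛb hρ hball x hxΛ
    have hr : ρ < ‖x‖ := by
      by_contra h
      push_neg at h
      exact hxΛ (hball (by simpa [mem_closedBall, dist_zero_right] using h))
    have hx : ρ₀ < ‖x‖ := hρ.trans hr
    have hx0 : 0 < ‖x‖ := hρ₀.trans hx
    set r := ‖x‖
    set ℓ := Real.log (r/ρ₀) with hℓdef
    have hℓ : 0 < ℓ := Real.log_pos (by rw [lt_div_iff₀ hρ₀]; linarith)
    have hrc : 0 < r ^ (c : ℝ) := Real.rpow_pos_of_pos hx0 c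
    have hw : 0 < ℓ ^ (β : ℝ) := Real.rpow_pos_of_pos hℓ β
    have h1β : 0 < ℓ ^ (1+β : ℝ) := Real.rpow_pos_of_pos hℓ _
    rw [part2 x hx, penalPot, if_neg hxΛ, hW x hx]
    have step1 : κ / (r ^ 2 * ℓ ^ (1+β)) * (r ^ (-c) * (c*β - κ * ℓ ^ (-β)))
        ≤ κ / (r ^ 2 * ℓ ^ (1+β)) * (r ^ (-c) * (c*β)) := by
      apply mul_le_mul_of_nonneg_left _ (by positivity)
      apply mul_le_mul_of_nonneg_left _ (by positivity)
      have : 0 < κ * ℓ ^ (-β : ℝ) := by positivity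
      linarith
    have step2 : κ / (r ^ 2 * ℓ ^ (1+β)) * (r ^ (-c) * (c*β))
        = κ * c * β / (r ^ N * ℓ ^ (1+β)) := by
      rw [← Real.rpow_natCast r N, hNc, Real.rpow_add hx0, Real.rpow_neg hx0.le,
        Real.rpow_two, sq]
      field_simp
    have step3 : 0 ≤ κ * β * (β + 1) / (r ^ N * ℓ ^ (2+β)) := by
      have : 0 < ℓ ^ (2+β : ℝ) := Real.rpow_pos_of_pos hℓ _
      have : 0 < r ^ N := pow_pos hx0 N
      positivity
    calc κ / (r ^ 2 * ℓ ^ (1+β)) * (r ^ (-c) * (c*β - κ * ℓ ^ (-β)))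
        ≤ κ * c * β / (r ^ N * ℓ ^ (1+β)) := by rw [← step2]; exact step1
      _ ≤ _ := le_add_of_nonneg_right step3
end

section
/- Let ρ₀ > 0 and ρ > ρ₀. Then there exists a constant C > 0 such that for every smooth compactly supported function u : ℝ² → ℝ one has ∫_{ℝ²} |∇u(x)|² dx + C ∫_{{ρ₀ < |x| < ρ}} |u(x)|² dx ≥ (1/4) ∫_{{|x| > ρ}} |u(x)|² / (|x|² (log(|x|/ρ₀))²) dx. -/
open MeasureTheory Metric Set Filter
open scoped RealInnerProductSpace Topology ENNReal

noncomputable section HardyAux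

abbrev E2 := EuclideanSpace ℝ (Fin 2)

/-- squared norm in coordinates -/
def S2 (x : E2) : ℝ := x 0 ^ 2 + x 1 ^ 2

lemma S2_eq_norm_sq (x : E2) : S2 x = ‖x‖ ^ 2 := by
  rw [EuclideanSpace.norm_eq, Real.sq_sqrt (by positivity)]
  simp [S2, Fin.sum_univ_two]

def e2 (i : Fin 2) : E2 := EuclideanSpace.single i 1

def L2 (x : E2) : E2 →L[ℝ] ℝ :=
  (2 * x 0) • (EuclideanSpace.proj (0 : Fin 2) : E2 →L[ℝ] ℝ)
    + (2 * x 1) • (EuclideanSpace.proj (1 : Fin 2) : E2 →L[ℝ] ℝ)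

lemma hasFDerivAt_S2 (x : E2) : HasFDerivAt S2 (L2 x) x := by
  have h0 : HasFDerivAt (fun y : E2 => y 0) (EuclideanSpace.proj (0 : Fin 2) : E2 →L[ℝ] ℝ) x :=
    (EuclideanSpace.proj (0 : Fin 2) : E2 →L[ℝ] ℝ).hasFDerivAt
  have h1 : HasFDerivAt (fun y : E2 => y 1) (EuclideanSpace.proj (1 : Fin 2) : E2 →L[ℝ] ℝ) x :=
    (EuclideanSpace.proj (1 : Fin 2) : E2 →L[ℝ] ℝ).hasFDerivAt
  have := ((h0.mul h0).add (h1.mul h1))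
  refine (this.congr_of_eventuallyEq (Filter.EventuallyEq.of_eq ?_)).congr_fderiv ?_
  · ext y; simp [S2, sq]
  · rw [L2]; module

lemma contDiff_S2 : ContDiff ℝ (⊤ : ℕ∞) S2 := by
  have h0 : ContDiff ℝ (⊤ : ℕ∞) (fun y : E2 => y 0) :=
    (EuclideanSpace.proj (0 : Fin 2) : E2 →L[ℝ] ℝ).contDiff
  have h1 : ContDiff ℝ (⊤ : ℕ∞) (fun y : E2 => y 1) :=
    (EuclideanSpace.proj (1 : Fin 2) : E2 →L[ℝ] ℝ).contDiff
  exact (h0.pow 2).add (h1.pow 2)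

lemma L2_apply_e2 (x : E2) (i : Fin 2) : L2 x (e2 i) = 2 * x i := by
  fin_cases i <;> simp [L2, e2, EuclideanSpace.single_apply] <;> norm_num


def phiH (c a b s : ℝ) : ℝ :=
  Real.smoothTransition ((s - a) / (b - a)) * (s * Real.log (s / c))⁻¹

def psiH (c s : ℝ) : ℝ := (s * Real.log (s / c))⁻¹

lemma phiH_of_le (c : ℝ) {a b s : ℝ} (hab : a < b) (h : s ≤ a) : phiH c a b s = 0 := by
  rw [phiH, Real.smoothTransition.zero_of_nonpos, zero_mul]
  apply div_nonpos_of_nonpos_of_nonneg <;> linarith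

lemma phiH_of_ge (c a : ℝ) {b s : ℝ} (hab : a < b) (h : b ≤ s) :
    phiH c a b s = psiH c s := by
  rw [phiH, psiH, Real.smoothTransition.one_of_one_le, one_mul]
  rw [le_div_iff₀ (by linarith)]; linarith

lemma log_pos_of {c s : ℝ} (hc : 0 < c) (h : c < s) : 0 < Real.log (s / c) :=
  Real.log_pos (by rw [lt_div_iff₀ hc]; linarith)

lemma denom_ne {c s : ℝ} (hc : 0 < c) (h : c < s) : s * Real.log (s / c) ≠ 0 := by
  have h1 := log_pos_of hc h
  have hs : (0:ℝ) < s := hc.trans h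
  positivity

lemma hasDerivAt_log_div {c s : ℝ} (hc : 0 < c) (hs : 0 < s) :
    HasDerivAt (fun t : ℝ => Real.log (t / c)) s⁻¹ s := by
  have h1 : HasDerivAt (fun t : ℝ => Real.log t - Real.log c) s⁻¹ s :=
    (Real.hasDerivAt_log hs.ne').sub_const _
  apply h1.congr_of_eventuallyEq
  filter_upwards [eventually_gt_nhds hs] with t ht
  rw [Real.log_div ht.ne' hc.ne']

lemma hasDerivAt_psiH {c s : ℝ} (hc : 0 < c) (h : c < s) :
    HasDerivAt (psiH c)
      (-(Real.log (s / c) + 1) / (s * Real.log (s / c)) ^ 2) s := by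
  have hs : (0:ℝ) < s := hc.trans h
  have hmul : HasDerivAt (fun t : ℝ => t * Real.log (t / c))
      (Real.log (s / c) + 1) s := by
    have := (hasDerivAt_id' s).mul (hasDerivAt_log_div hc hs)
    simpa [mul_inv_cancel₀ hs.ne', Pi.mul_def] using this
  exact hmul.inv (denom_ne hc h)

lemma contDiffAt_psiH {c s : ℝ} (hc : 0 < c) (h : c < s) :
    ContDiffAt ℝ (⊤ : ℕ∞) (psiH c) s := by
  have hs : (0:ℝ) < s := hc.trans h
  apply ContDiffAt.inv
  · exact contDiffAt_id.mul ((Real.contDiffAt_log.2 (by positivity)).comp s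
      (contDiffAt_id.div_const c))
  · exact denom_ne hc h

lemma contDiffAt_phiH {c a b s : ℝ} (hc : 0 < c) (hca : c < a) (hab : a < b) :
    ContDiffAt ℝ (⊤ : ℕ∞) (phiH c a b) s := by
  rcases lt_or_ge s a with hs | hs
  · have : phiH c a b =ᶠ[𝓝 s] (fun _ => 0) := by
      filter_upwards [eventually_lt_nhds hs] with t ht
      exact phiH_of_le c hab ht.le
    exact (contDiffAt_const (c := (0:ℝ))).congr_of_eventuallyEq this
  · have hcs : c < s := lt_of_lt_of_le hca hs
    apply ContDiffAt.mul
    · have h1 : ContDiffAt ℝ (⊤ : ℕ∞) Real.smoothTransition ((s - a) / (b - a)) :=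
        (Real.smoothTransition.contDiff).contDiffAt
      have h2 : ContDiffAt ℝ (⊤ : ℕ∞) (fun t : ℝ => (t - a) / (b - a)) s :=
        (contDiffAt_id.sub contDiffAt_const).div_const _
      exact h1.comp s h2
    · exact contDiffAt_psiH hc hcs



def Vf (c a b : ℝ) (i : Fin 2) (x : E2) : ℝ := -(x i * phiH c a b (S2 x))

lemma contDiff_Vf {c a b : ℝ} (hc : 0 < c) (hca : c < a) (hab : a < b) (i : Fin 2) :
    ContDiff ℝ (⊤ : ℕ∞) (Vf c a b i) := by
  rw [contDiff_iff_contDiffAt]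
  intro x
  apply ContDiffAt.neg
  apply ContDiffAt.mul
  · exact ((EuclideanSpace.proj i : E2 →L[ℝ] ℝ).contDiff (n := (⊤ : ℕ∞))).contDiffAt
  · exact (contDiffAt_phiH hc hca hab).comp x contDiff_S2.contDiffAt

lemma Vf_eventually_zero {c a b : ℝ} (hab : a < b) (i : Fin 2) {x : E2} (hx : S2 x < a) :
    Vf c a b i =ᶠ[𝓝 x] (fun _ => 0) := by
  have hcont : ContinuousAt S2 x := contDiff_S2.continuous.continuousAt
  filter_upwards [hcont.eventually (eventually_lt_nhds hx)] with y hy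
  rw [Vf, phiH_of_le c hab hy.le, mul_zero, neg_zero]

lemma fderiv_Vf_zero {c a b : ℝ} (hab : a < b) (i : Fin 2) {x : E2} (hx : S2 x < a) :
    fderiv ℝ (Vf c a b i) x = 0 := by
  rw [(Vf_eventually_zero hab i hx).fderiv_eq]
  exact fderiv_const_apply 0

lemma hasFDerivAt_Vf_outer {c a b : ℝ} (hc : 0 < c) (hca : c < a) (hab : a < b) (i : Fin 2)
    {x : E2} (hx : b < S2 x) :
    HasFDerivAt (Vf c a b i)
      (-(x i • ((-(Real.log (S2 x / c) + 1) / (S2 x * Real.log (S2 x / c)) ^ 2) • L2 x)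
          + psiH c (S2 x) • (EuclideanSpace.proj i : E2 →L[ℝ] ℝ))) x := by
  have hcs : c < S2 x := (hca.trans hab).trans hx
  have hG : HasFDerivAt (fun y => psiH c (S2 y))
      ((-(Real.log (S2 x / c) + 1) / (S2 x * Real.log (S2 x / c)) ^ 2) • L2 x) x :=
    (hasDerivAt_psiH hc hcs).comp_hasFDerivAt x (hasFDerivAt_S2 x)
  have hW : HasFDerivAt (fun y : E2 => y i * psiH c (S2 y))
      (x i • ((-(Real.log (S2 x / c) + 1) / (S2 x * Real.log (S2 x / c)) ^ 2) • L2 x)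
          + psiH c (S2 x) • (EuclideanSpace.proj i : E2 →L[ℝ] ℝ)) x :=
    ((EuclideanSpace.proj i : E2 →L[ℝ] ℝ).hasFDerivAt).mul hG
  apply hW.neg.congr_of_eventuallyEq
  have hcont : ContinuousAt S2 x := contDiff_S2.continuous.continuousAt
  filter_upwards [hcont.eventually (eventually_gt_nhds hx)] with y hy
  rw [Vf, phiH_of_ge c a hab hy.le]; rfl

def Df (c a b : ℝ) (x : E2) : ℝ :=
  fderiv ℝ (Vf c a b 0) x (e2 0) + fderiv ℝ (Vf c a b 1) x (e2 1)
    - (Vf c a b 0 x ^ 2 + Vf c a b 1 x ^ 2)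

lemma Vf_zero_of_lt {c a b : ℝ} (hab : a < b) (i : Fin 2) {x : E2} (hx : S2 x < a) :
    Vf c a b i x = 0 := by
  rw [Vf, phiH_of_le c hab hx.le, mul_zero, neg_zero]

lemma Df_zero {c a b : ℝ} (hab : a < b) {x : E2} (hx : S2 x < a) : Df c a b x = 0 := by
  rw [Df, fderiv_Vf_zero hab 0 hx, fderiv_Vf_zero hab 1 hx,
    Vf_zero_of_lt hab 0 hx, Vf_zero_of_lt hab 1 hx]
  simp

lemma proj_e2 (i : Fin 2) : (EuclideanSpace.proj i : E2 →L[ℝ] ℝ) (e2 i) = 1 := by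
  fin_cases i <;> simp [e2]

lemma Vf_of_gt {c a b : ℝ} (hab : a < b) (i : Fin 2) {x : E2} (hx : b < S2 x) :
    Vf c a b i x = -(x i * psiH c (S2 x)) := by
  rw [Vf, phiH_of_ge c a hab hx.le]

lemma Df_outer {c a b : ℝ} (hc : 0 < c) (hca : c < a) (hab : a < b) {x : E2}
    (hx : b < S2 x) :
    Df c a b x = (S2 x * Real.log (S2 x / c) ^ 2)⁻¹ := by
  have hcs : c < S2 x := (hca.trans hab).trans hx
  have hs : (0:ℝ) < S2 x := hc.trans hcs
  have hm : (0:ℝ) < Real.log (S2 x / c) := log_pos_of hc hcs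
  set s := S2 x with hsdef
  set m := Real.log (s / c) with hmdef
  have h0 := (hasFDerivAt_Vf_outer hc hca hab 0 hx).fderiv
  have h1 := (hasFDerivAt_Vf_outer hc hca hab 1 hx).fderiv
  rw [Df, h0, h1, Vf_of_gt hab 0 hx, Vf_of_gt hab 1 hx]
  simp only [ContinuousLinearMap.neg_apply, ContinuousLinearMap.add_apply,
    ContinuousLinearMap.smul_apply, L2_apply_e2, proj_e2, smul_eq_mul]
  have hs2 : x 0 ^ 2 + x 1 ^ 2 = s := rfl
  rw [psiH, ← hsdef, ← hmdef]
  have hsne : s ≠ 0 := hs.ne'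
  have hmne : m ≠ 0 := hm.ne'
  field_simp
  rw [← hs2]
  ring

end HardyAux

set_option maxHeartbeats 1000000 in
theorem stmt11 (ρ₀ ρ : ℝ) (hρ₀ : 0 < ρ₀) (hρ : ρ₀ < ρ) :
    ∃ C > (0 : ℝ), ∀ u : EuclideanSpace ℝ (Fin 2) → ℝ,
      ContDiff ℝ (⊤ : ℕ∞) u → HasCompactSupport u →
      (1 / 4) * ∫ x in {x : EuclideanSpace ℝ (Fin 2) | ρ < ‖x‖},
          u x ^ 2 / (‖x‖ ^ 2 * Real.log (‖x‖ / ρ₀) ^ 2) ≤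
        (∫ x, ‖gradient u x‖ ^ 2) +
          C * ∫ x in {x : EuclideanSpace ℝ (Fin 2) | ρ₀ < ‖x‖ ∧ ‖x‖ < ρ}, u x ^ 2 := by
  classical
  set ρ₁ : ℝ := (2 * ρ₀ + ρ) / 3 with hρ₁def
  set ρ₂ : ℝ := (ρ₀ + 2 * ρ) / 3 with hρ₂def
  have hρ₁pos : 0 < ρ₁ := by rw [hρ₁def]; linarith
  have hρ₂pos : 0 < ρ₂ := by rw [hρ₂def]; linarith
  have h01 : ρ₀ < ρ₁ := by rw [hρ₁def]; linarith
  have h12 : ρ₁ < ρ₂ := by rw [hρ₁def, hρ₂def]; linarith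
  have h2ρ : ρ₂ < ρ := by rw [hρ₂def]; linarith
  set c : ℝ := ρ₀ ^ 2 with hcdef
  set a : ℝ := ρ₁ ^ 2 with hadef
  set b : ℝ := ρ₂ ^ 2 with hbdef
  have hc : 0 < c := by positivity
  have hca : c < a := by rw [hcdef, hadef]; nlinarith
  have hab : a < b := by rw [hadef, hbdef]; nlinarith
  -- continuity of Df
  have hVcd : ∀ i : Fin 2, ContDiff ℝ (⊤ : ℕ∞) (Vf c a b i) := contDiff_Vf hc hca hab
  have hdVc : ∀ i : Fin 2, Continuous fun x => fderiv ℝ (Vf c a b i) x (e2 i) :=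
    fun i => ((hVcd i).continuous_fderiv (by simp)).clm_apply continuous_const
  have hVc : ∀ i : Fin 2, Continuous (Vf c a b i) := fun i => (hVcd i).continuous
  have hDc : Continuous (Df c a b) := by
    apply Continuous.sub
    · exact ((hdVc 0).add (hdVc 1))
    · exact ((hVc 0).pow 2).add ((hVc 1).pow 2)
  obtain ⟨M, hM⟩ := (isCompact_closedBall (0 : E2) ρ).exists_bound_of_continuousOn
    hDc.continuousOn
  have hM0 : 0 ≤ M := le_trans (norm_nonneg _) (hM 0 (by simp; linarith))
  refine ⟨M + 1, by linarith, ?_⟩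
  intro u hu hsupp
  set p : E2 → ℝ := fun x => u x ^ 2 with hpdef
  have hu1 : Differentiable ℝ u := hu.differentiable (by simp)
  have hpc : ContDiff ℝ (⊤ : ℕ∞) p := hu.pow 2
  have hp1 : Differentiable ℝ p := hpc.differentiable (by simp)
  have hpuu : p = u * u := by funext x; simp [hpdef, pow_two]
  have hps : HasCompactSupport p := by rw [hpuu]; exact hsupp.mul_right
  have hpnn : ∀ x, 0 ≤ p x := fun x => by rw [hpdef]; positivity
  -- derivative of p
  have hpd : ∀ x, HasFDerivAt p (u x • fderiv ℝ u x + u x • fderiv ℝ u x) x := by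
    intro x
    rw [hpuu]
    exact (hu1 x).hasFDerivAt.mul (hu1 x).hasFDerivAt
  have hdP : ∀ (i : Fin 2) x, fderiv ℝ p x (e2 i) = 2 * u x * fderiv ℝ u x (e2 i) := by
    intro i x
    rw [(hpd x).fderiv]
    simp [two_mul]; ring
  -- gradient facts
  have hgrad_apply : ∀ x (v : E2), fderiv ℝ u x v = ⟪gradient u x, v⟫ := by
    intro x v
    have h1 : InnerProductSpace.toDual ℝ E2 (gradient u x) = fderiv ℝ u x :=
      (InnerProductSpace.toDual ℝ E2).apply_symm_apply _
    rw [← h1, InnerProductSpace.toDual_apply_apply]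
  have hgrad_coord : ∀ x (i : Fin 2), fderiv ℝ u x (e2 i) = gradient u x i := by
    intro x i
    rw [hgrad_apply]
    rw [e2, EuclideanSpace.inner_single_right]; simp
  have hgrad_norm : ∀ x, ‖gradient u x‖ ^ 2 = gradient u x 0 ^ 2 + gradient u x 1 ^ 2 :=
    fun x => (S2_eq_norm_sq (gradient u x)).symm
  -- integrability package
  have hDuc : Continuous (fderiv ℝ u) := hu.continuous_fderiv (by simp)
  have hgradc : Continuous fun x => ‖gradient u x‖ ^ 2 := by
    have : Continuous fun x => gradient u x :=
      (InnerProductSpace.toDual ℝ E2).symm.continuous.comp hDuc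
    exact (this.norm.pow 2)
  have hgrads : HasCompactSupport fun x => ‖gradient u x‖ ^ 2 := by
    have h1 : HasCompactSupport (fderiv ℝ u) := hsupp.fderiv ℝ
    have h2 := h1.comp_left
      (g := fun L : E2 →L[ℝ] ℝ => ‖(InnerProductSpace.toDual ℝ E2).symm L‖ ^ 2) (by simp)
    exact h2
  have hIgrad : Integrable (fun x => ‖gradient u x‖ ^ 2) :=
    hgradc.integrable_of_hasCompactSupport hgrads
  have hdpc : ∀ i : Fin 2, Continuous fun x => fderiv ℝ p x (e2 i) :=
    fun i => (hpc.continuous_fderiv (by simp)).clm_apply continuous_const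
  have hIdPV : ∀ i : Fin 2, Integrable fun x => fderiv ℝ p x (e2 i) * Vf c a b i x := by
    intro i
    apply ((hdpc i).mul (hVc i)).integrable_of_hasCompactSupport
    exact (hps.fderiv_apply ℝ (e2 i)).mul_right
  have hIpdV : ∀ i : Fin 2, Integrable fun x => p x * fderiv ℝ (Vf c a b i) x (e2 i) := by
    intro i
    exact (hpc.continuous.mul (hdVc i)).integrable_of_hasCompactSupport hps.mul_right
  have hIpV : ∀ i : Fin 2, Integrable fun x => p x * Vf c a b i x := fun i =>
    (hpc.continuous.mul (hVc i)).integrable_of_hasCompactSupport hps.mul_right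
  have hIQ : Integrable fun x => p x * (Vf c a b 0 x ^ 2 + Vf c a b 1 x ^ 2) := by
    apply (hpc.continuous.mul (((hVc 0).pow 2).add ((hVc 1).pow 2))).integrable_of_hasCompactSupport
    exact hps.mul_right
  have hIpD : Integrable fun x => p x * Df c a b x :=
    (hpc.continuous.mul hDc).integrable_of_hasCompactSupport hps.mul_right
  -- integration by parts
  have ibp : ∀ i : Fin 2, (∫ x, p x * fderiv ℝ (Vf c a b i) x (e2 i))
      = -∫ x, fderiv ℝ p x (e2 i) * Vf c a b i x :=
    fun i => integral_mul_fderiv_eq_neg_fderiv_mul_of_integrable (hIdPV i) (hIpdV i)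
      (hIpV i) (fun x _ => hp1 x) (fun x _ => (hVcd i).differentiable (by simp) x)
  -- key estimate : ∫ p * Df ≤ ∫ |∇u|²
  have key3 : (∫ x, p x * Df c a b x) ≤ ∫ x, ‖gradient u x‖ ^ 2 := by
    have e1 : (∫ x, p x * Df c a b x)
        = ((∫ x, p x * fderiv ℝ (Vf c a b 0) x (e2 0))
            + ∫ x, p x * fderiv ℝ (Vf c a b 1) x (e2 1))
          - ∫ x, p x * (Vf c a b 0 x ^ 2 + Vf c a b 1 x ^ 2) := by
      have hsum : Integrable (fun x => p x * fderiv ℝ (Vf c a b 0) x (e2 0)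
          + p x * fderiv ℝ (Vf c a b 1) x (e2 1)) := (hIpdV 0).add (hIpdV 1)
      have hfun : (fun x => p x * Df c a b x)
          = fun x => (p x * fderiv ℝ (Vf c a b 0) x (e2 0)
              + p x * fderiv ℝ (Vf c a b 1) x (e2 1))
            - p x * (Vf c a b 0 x ^ 2 + Vf c a b 1 x ^ 2) := by
        funext x; rw [Df]; ring
      rw [hfun, integral_sub hsum hIQ,
        integral_add (hIpdV 0) (hIpdV 1)]
    have e2' : ((∫ x, p x * fderiv ℝ (Vf c a b 0) x (e2 0))
            + ∫ x, p x * fderiv ℝ (Vf c a b 1) x (e2 1))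
        = ∫ x, -(fderiv ℝ p x (e2 0) * Vf c a b 0 x + fderiv ℝ p x (e2 1) * Vf c a b 1 x) := by
      rw [ibp 0, ibp 1, ← neg_add, ← integral_add (hIdPV 0) (hIdPV 1), ← integral_neg]
    have mono : (∫ x, -(fderiv ℝ p x (e2 0) * Vf c a b 0 x
            + fderiv ℝ p x (e2 1) * Vf c a b 1 x))
        ≤ ∫ x, (‖gradient u x‖ ^ 2 + p x * (Vf c a b 0 x ^ 2 + Vf c a b 1 x ^ 2)) := by
      apply integral_mono ((hIdPV 0).add (hIdPV 1)).neg (hIgrad.add hIQ)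
      intro x
      have h0 := hdP 0 x
      have h1 := hdP 1 x
      rw [hgrad_coord] at h0 h1
      simp only [Pi.neg_apply, Pi.add_apply]
      rw [h0, h1, hgrad_norm]
      simp only [hpdef]
      nlinarith [sq_nonneg (gradient u x 0 + u x * Vf c a b 0 x),
        sq_nonneg (gradient u x 1 + u x * Vf c a b 1 x)]
    rw [integral_add hIgrad hIQ] at mono
    rw [e1, e2']
    linarith
  -- region decomposition
  set sSet : Set E2 := {x : E2 | ρ < ‖x‖} with hsSetdef
  set A : Set E2 := {x : E2 | ρ₀ < ‖x‖ ∧ ‖x‖ < ρ} with hAdef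
  have hsMeas : MeasurableSet sSet :=
    (isOpen_lt continuous_const continuous_norm).measurableSet
  have hAMeas : MeasurableSet A := by
    have : A = {x : E2 | ρ₀ < ‖x‖} ∩ {x : E2 | ‖x‖ < ρ} := rfl
    rw [this]
    exact ((isOpen_lt continuous_const continuous_norm).inter
      (isOpen_lt continuous_norm continuous_const)).measurableSet
  have hsplit : (∫ x in sSet, p x * Df c a b x) + ∫ x in sSetᶜ, p x * Df c a b x
      = ∫ x, p x * Df c a b x := integral_add_compl hsMeas hIpD
  -- on sSet, p * Df is the weighted quantity
  have hSgt : ∀ x : E2, ρ₂ < ‖x‖ → b < S2 x := by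
    intro x hx
    rw [S2_eq_norm_sq, hbdef]
    nlinarith [norm_nonneg x]
  have hseq : (∫ x in sSet, p x * Df c a b x)
      = ∫ x in sSet, 1 / 4 * (u x ^ 2 / (‖x‖ ^ 2 * Real.log (‖x‖ / ρ₀) ^ 2)) := by
    apply setIntegral_congr_fun hsMeas
    intro x hx
    have hxρ : ρ < ‖x‖ := hx
    have hb : b < S2 x := hSgt x (by linarith)
    have hxn : 0 < ‖x‖ := by linarith
    have hL : 0 < Real.log (‖x‖ / ρ₀) := Real.log_pos (by rw [lt_div_iff₀ hρ₀]; linarith)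
    have hlogeq : Real.log (S2 x / c) = 2 * Real.log (‖x‖ / ρ₀) := by
      rw [S2_eq_norm_sq, hcdef, ← div_pow, Real.log_pow]
      push_cast; ring
    show p x * Df c a b x = 1 / 4 * (u x ^ 2 / (‖x‖ ^ 2 * Real.log (‖x‖ / ρ₀) ^ 2))
    rw [Df_outer hc hca hab hb, hlogeq, S2_eq_norm_sq, hpdef]
    have h1 : (0:ℝ) < ‖x‖ ^ 2 := by positivity
    rw [show ‖x‖ ^ 2 * (2 * Real.log (‖x‖ / ρ₀)) ^ 2
        = 4 * (‖x‖ ^ 2 * Real.log (‖x‖ / ρ₀) ^ 2) from by ring]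
    rw [mul_inv, div_eq_mul_inv, one_div]
    ring
  -- lower bound on the complement
  have hcomp : -(M + 1) * (∫ x in A, u x ^ 2) ≤ ∫ x in sSetᶜ, p x * Df c a b x := by
    have hIp : Integrable p := hpc.continuous.integrable_of_hasCompactSupport hps
    have hIind : Integrable (fun x => -(M + 1) * A.indicator p x) :=
      ((hIp.indicator hAMeas).const_mul _)
    have hpt : ∀ x ∈ sSetᶜ, -(M + 1) * A.indicator p x ≤ p x * Df c a b x := by
      intro x hx
      have hxρ : ‖x‖ ≤ ρ := le_of_not_gt hx
      rcases lt_or_ge ‖x‖ ρ₁ with h1 | h1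
      · have hS : S2 x < a := by
          rw [S2_eq_norm_sq, hadef]
          nlinarith [norm_nonneg x]
        rw [Df_zero hab hS, mul_zero]
        have : (0:ℝ) ≤ A.indicator p x := Set.indicator_nonneg (fun y _ => hpnn y) x
        nlinarith
      · rcases lt_or_eq_of_le hxρ with h2 | h2
        · have hxA : x ∈ A := ⟨h01.trans_le h1, h2⟩
          rw [Set.indicator_of_mem hxA]
          have hDlb : -(M + 1) ≤ Df c a b x := by
            have := hM x (by simpa [mem_closedBall, dist_eq_norm] using hxρ)
            have h3 : |Df c a b x| ≤ M := by rwa [Real.norm_eq_abs] at this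
            have := abs_le.1 h3
            linarith [this.1]
          calc -(M + 1) * p x = p x * -(M + 1) := by ring
            _ ≤ p x * Df c a b x := mul_le_mul_of_nonneg_left hDlb (hpnn x)
        · have hb : b < S2 x := hSgt x (by rw [h2]; linarith)
          have hxA : x ∉ A := by
            rw [hAdef]
            intro hmem
            exact absurd hmem.2 (by rw [h2]; exact lt_irrefl ρ)
          rw [Set.indicator_of_notMem hxA, mul_zero]
          have hS : 0 < S2 x := by rw [S2_eq_norm_sq, h2]; nlinarith
          have hDnn : 0 ≤ Df c a b x := by
            rw [Df_outer hc hca hab hb]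
            exact inv_nonneg.2 (mul_nonneg hS.le (sq_nonneg _))
          exact mul_nonneg (hpnn x) hDnn
    have hmono := setIntegral_mono_on hIind.integrableOn hIpD.integrableOn
      (hsMeas.compl) hpt
    have heval : (∫ x in sSetᶜ, -(M + 1) * A.indicator p x)
        = -(M + 1) * ∫ x in A, u x ^ 2 := by
      rw [integral_const_mul, setIntegral_indicator hAMeas]
      have : sSetᶜ ∩ A = A := by
        apply Set.inter_eq_self_of_subset_right
        intro x hx
        exact not_lt.2 hx.2.le
      rw [this, hpdef]
    rw [← heval]
    exact hmono
  -- assemble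
  have hfinal : (1 / 4) * (∫ x in sSet, u x ^ 2 / (‖x‖ ^ 2 * Real.log (‖x‖ / ρ₀) ^ 2))
      = ∫ x in sSet, p x * Df c a b x := by
    rw [hseq, integral_const_mul]
  rw [hfinal]
  have : (∫ x in sSet, p x * Df c a b x)
      = (∫ x, p x * Df c a b x) - ∫ x in sSetᶜ, p x * Df c a b x := by linarith
  rw [this]
  have hgoal : (M + 1) * (∫ x in A, u x ^ 2) = -(-(M + 1) * ∫ x in A, u x ^ 2) := by ring
  linarith [key3, hcomp]
end

section
/- Let N ≥ 1 and let W : ℝ^N → ℝ be of class C² with W(x) > 0 for every x. Then for every smooth compactly supported function u : ℝ^N → ℝ one has the identity ∫_{ℝ^N} |∇u(x)|² dx = ∫_{ℝ^N} (−ΔW(x)/W(x)) |u(x)|² dx + ∫_{ℝ^N} |∇(u/W)(x)|² W(x)² dx. In particular, if −ΔW ≥ 0 pointwise then ∫ |∇u|² ≥ ∫ (−ΔW/W)|u|². -/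
open MeasureTheory Metric Set Filter
open scoped RealInnerProductSpace Topology ENNReal

section Aux

open InnerProductSpace

variable {N : ℕ}

lemma aux_grad_apply (f : EuclideanSpace ℝ (Fin N) → ℝ) (x y : EuclideanSpace ℝ (Fin N)) :
    ⟪gradient f x, y⟫ = fderiv ℝ f x y := by
  simp [gradient, toDual_symm_apply]

lemma aux_norm_grad_sq (f : EuclideanSpace ℝ (Fin N) → ℝ) (x : EuclideanSpace ℝ (Fin N)) :
    ‖gradient f x‖ ^ 2 = ∑ i, (fderiv ℝ f x (EuclideanSpace.single i 1)) ^ 2 := by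
  have h1 : ∀ i, fderiv ℝ f x (EuclideanSpace.single i 1) = gradient f x i := by
    intro i
    rw [← aux_grad_apply]
    rw [EuclideanSpace.inner_single_right]
    simp
  simp_rw [h1]
  rw [EuclideanSpace.norm_eq, Real.sq_sqrt (by positivity)]
  simp [Real.norm_eq_abs, sq_abs]

lemma aux_lap_eq (W : EuclideanSpace ℝ (Fin N) → ℝ) (hW : ContDiff ℝ 2 W)
    (x : EuclideanSpace ℝ (Fin N)) :
    lap W x = ∑ i, fderiv ℝ (fun y => fderiv ℝ W y (EuclideanSpace.single i 1)) x
      (EuclideanSpace.single i 1) := by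
  unfold lap
  refine Finset.sum_congr rfl fun i _ => ?_
  rw [iteratedFDeriv_two_apply]
  have hd : DifferentiableAt ℝ (fderiv ℝ W) x :=
    ((hW.fderiv_right (m := 1) (by norm_num)).differentiable (by norm_num)) x
  rw [fderiv_clm_apply hd (differentiableAt_const _)]
  simp

lemma aux_ibp (W f : EuclideanSpace ℝ (Fin N) → ℝ) (hW : ContDiff ℝ 2 W)
    (hf : ContDiff ℝ 2 f) (hsupp : HasCompactSupport f) (i : Fin N) :
    ∫ x, fderiv ℝ f x (EuclideanSpace.single i 1) *
        fderiv ℝ W x (EuclideanSpace.single i 1) =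
      - ∫ x, f x * fderiv ℝ (fun y => fderiv ℝ W y (EuclideanSpace.single i 1)) x
        (EuclideanSpace.single i 1) := by
  set e : EuclideanSpace ℝ (Fin N) := EuclideanSpace.single i 1
  set g : EuclideanSpace ℝ (Fin N) → ℝ := fun y => fderiv ℝ W y e with hg
  have hWd : ContDiff ℝ 1 (fderiv ℝ W) := hW.fderiv_right (m := 1) (by norm_num)
  have hgd : Differentiable ℝ g :=
    fun x => (ContinuousLinearMap.apply ℝ ℝ e).differentiableAt.comp x (hWd.differentiable (by norm_num) x)
  have hgc : Continuous g := (ContinuousLinearMap.apply ℝ ℝ e).continuous.comp hWd.continuous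
  have hfc : Continuous f := hf.continuous
  have hfd : Differentiable ℝ f := hf.differentiable (by norm_num)
  have hfdc : Continuous (fun x => fderiv ℝ f x e) :=
    (ContinuousLinearMap.apply ℝ ℝ e).continuous.comp (hf.continuous_fderiv (by norm_num))
  have hgdc : Continuous (fun x => fderiv ℝ g x e) := by
    have h2 : Continuous (fderiv ℝ (fderiv ℝ W)) := hWd.continuous_fderiv (by norm_num)
    have : (fun x => fderiv ℝ g x e) = fun x => fderiv ℝ (fderiv ℝ W) x e e := by
      funext x
      rw [hg, fderiv_clm_apply (hWd.differentiable (by norm_num) x) (differentiableAt_const _)]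
      simp
    rw [this]
    exact ((ContinuousLinearMap.apply ℝ ℝ e).continuous.comp
      (((ContinuousLinearMap.apply ℝ (EuclideanSpace ℝ (Fin N) →L[ℝ] ℝ) e).continuous.comp h2)))
  have hsupp' : HasCompactSupport (fun x => fderiv ℝ f x e) :=
    (hsupp.fderiv ℝ).mono (fun x hx => by
      simp only [Function.mem_support] at hx ⊢
      intro h; exact hx (by simp [h]))
  have h1 : Integrable (fun x => fderiv ℝ f x e * g x) :=
    (hfdc.mul hgc).integrable_of_hasCompactSupport (hsupp'.mul_right)
  have h2 : Integrable (fun x => f x * fderiv ℝ g x e) :=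
    (hfc.mul hgdc).integrable_of_hasCompactSupport (hsupp.mul_right)
  have h3 : Integrable (fun x => f x * g x) :=
    (hfc.mul hgc).integrable_of_hasCompactSupport (hsupp.mul_right)
  have := integral_mul_fderiv_eq_neg_fderiv_mul_of_integrable h1 h2 h3
    (fun x _ => hfd x) (fun x _ => hgd x)
  linarith [this]

lemma aux_int_summand (W f : EuclideanSpace ℝ (Fin N) → ℝ) (hW : ContDiff ℝ 2 W)
    (hf : ContDiff ℝ 2 f) (hsupp : HasCompactSupport f) (i : Fin N) :
    Integrable (fun x => fderiv ℝ f x (EuclideanSpace.single i 1) *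
        fderiv ℝ W x (EuclideanSpace.single i 1)) := by
  set e : EuclideanSpace ℝ (Fin N) := EuclideanSpace.single i 1
  have hWd : ContDiff ℝ 1 (fderiv ℝ W) := hW.fderiv_right (m := 1) (by norm_num)
  have hgc : Continuous (fun y => fderiv ℝ W y e) :=
    (ContinuousLinearMap.apply ℝ ℝ e).continuous.comp hWd.continuous
  have hfdc : Continuous (fun x => fderiv ℝ f x e) :=
    (ContinuousLinearMap.apply ℝ ℝ e).continuous.comp (hf.continuous_fderiv (by norm_num))
  have hsupp' : HasCompactSupport (fun x => fderiv ℝ f x e) :=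
    (hsupp.fderiv ℝ).mono (fun x hx => by
      simp only [Function.mem_support] at hx ⊢
      intro h; exact hx (by simp [h]))
  exact (hfdc.mul hgc).integrable_of_hasCompactSupport (hsupp'.mul_right)

lemma aux_ibp_sum (W f : EuclideanSpace ℝ (Fin N) → ℝ) (hW : ContDiff ℝ 2 W)
    (hf : ContDiff ℝ 2 f) (hsupp : HasCompactSupport f) :
    ∫ x, ∑ i, fderiv ℝ f x (EuclideanSpace.single i 1) *
        fderiv ℝ W x (EuclideanSpace.single i 1) =
      - ∫ x, f x * lap W x := by
  have hWd : ContDiff ℝ 1 (fderiv ℝ W) := hW.fderiv_right (m := 1) (by norm_num)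
  have hint2 : ∀ i : Fin N, Integrable (fun x => f x *
      fderiv ℝ (fun y => fderiv ℝ W y (EuclideanSpace.single i 1)) x
        (EuclideanSpace.single i 1)) := by
    intro i
    set e : EuclideanSpace ℝ (Fin N) := EuclideanSpace.single i 1
    have hgdc : Continuous (fun x =>
        fderiv ℝ (fun y => fderiv ℝ W y e) x e) := by
      have h2 : Continuous (fderiv ℝ (fderiv ℝ W)) := hWd.continuous_fderiv (by norm_num)
      have : (fun x => fderiv ℝ (fun y => fderiv ℝ W y e) x e)
          = fun x => fderiv ℝ (fderiv ℝ W) x e e := by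
        funext x
        rw [fderiv_clm_apply (hWd.differentiable (by norm_num) x) (differentiableAt_const _)]
        simp
      rw [this]
      exact ((ContinuousLinearMap.apply ℝ ℝ e).continuous.comp
        (((ContinuousLinearMap.apply ℝ (EuclideanSpace ℝ (Fin N) →L[ℝ] ℝ) e).continuous.comp h2)))
    exact (hf.continuous.mul hgdc).integrable_of_hasCompactSupport (hsupp.mul_right)
  rw [integral_finset_sum _ (fun i _ => aux_int_summand W f hW hf hsupp i)]
  have : ∀ i ∈ Finset.univ, (∫ x, fderiv ℝ f x (EuclideanSpace.single i 1) *
      fderiv ℝ W x (EuclideanSpace.single i 1)) =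
      - ∫ x, f x * fderiv ℝ (fun y => fderiv ℝ W y (EuclideanSpace.single i 1)) x
        (EuclideanSpace.single i 1) := fun i _ => aux_ibp W f hW hf hsupp i
  rw [Finset.sum_congr rfl this, Finset.sum_neg_distrib,
    ← integral_finset_sum _ (fun i _ => hint2 i)]
  congr 1
  refine integral_congr_ae (Filter.Eventually.of_forall fun x => ?_)
  simp only [aux_lap_eq W hW, Finset.mul_sum]

end Aux

/-- Agmon--Allegretto--Piepenbrick positivity principle (ground state representation). -/
theorem stmt14 (N : ℕ) (hN : 1 ≤ N)
    (W : EuclideanSpace ℝ (Fin N) → ℝ) (hW : ContDiff ℝ 2 W) (hWpos : ∀ x, 0 < W x) :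
    (∀ u : EuclideanSpace ℝ (Fin N) → ℝ, ContDiff ℝ (⊤ : ℕ∞) u → HasCompactSupport u →
      ∫ x, ‖gradient u x‖ ^ 2 =
        (∫ x, (-lap W x / W x) * u x ^ 2) +
          ∫ x, ‖gradient (fun y => u y / W y) x‖ ^ 2 * W x ^ 2) ∧
    ((∀ x, 0 ≤ -lap W x) →
      ∀ u : EuclideanSpace ℝ (Fin N) → ℝ, ContDiff ℝ (⊤ : ℕ∞) u → HasCompactSupport u →
        ∫ x, (-lap W x / W x) * u x ^ 2 ≤ ∫ x, ‖gradient u x‖ ^ 2) := by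
  have main : ∀ u : EuclideanSpace ℝ (Fin N) → ℝ, ContDiff ℝ (⊤ : ℕ∞) u → HasCompactSupport u →
      ∫ x, ‖gradient u x‖ ^ 2 =
        (∫ x, (-lap W x / W x) * u x ^ 2) +
          ∫ x, ‖gradient (fun y => u y / W y) x‖ ^ 2 * W x ^ 2 := by
    intro u hu hcs
    set v : EuclideanSpace ℝ (Fin N) → ℝ := fun y => u y / W y with hv_def
    set f : EuclideanSpace ℝ (Fin N) → ℝ := fun y => u y ^ 2 / W y with hf_def
    have hWne : ∀ x, W x ≠ 0 := fun x => (hWpos x).ne'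
    have hu2 : ContDiff ℝ 2 u := hu.of_le (by norm_cast)
    have hv : ContDiff ℝ 2 v := hu2.div hW hWne
    have hf : ContDiff ℝ 2 f := (hu2.pow 2).div hW hWne
    have hdu : Differentiable ℝ u := hu2.differentiable (by norm_num)
    have hdv : Differentiable ℝ v := hv.differentiable (by norm_num)
    have hdW : Differentiable ℝ W := hW.differentiable (by norm_num)
    have hsuppv : HasCompactSupport v := hcs.mono (fun x hx => by
      simp only [Function.mem_support, hv_def] at hx ⊢
      intro h; exact hx (by simp [h]))
    have hsuppf : HasCompactSupport f := hcs.mono (fun x hx => by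
      simp only [Function.mem_support, hf_def] at hx ⊢
      intro h; exact hx (by simp [h]))
    -- derivative formulas
    have hu_eq : u = fun y => v y * W y := by
      funext y
      show u y = u y / W y * W y
      rw [div_mul_cancel₀ _ (hWne y)]
    have hf_eq : f = fun y => u y * v y := by
      funext y; rw [hf_def, hv_def]; ring
    have kdu : ∀ x y, fderiv ℝ u x y = v x * fderiv ℝ W x y + W x * fderiv ℝ v x y := by
      intro x y
      conv_lhs => rw [hu_eq]
      rw [fderiv_fun_mul (hdv x) (hdW x)]
      simp only [ContinuousLinearMap.add_apply, ContinuousLinearMap.coe_smul',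
        Pi.smul_apply, smul_eq_mul]
    have kdf : ∀ x y, fderiv ℝ f x y = u x * fderiv ℝ v x y + v x * fderiv ℝ u x y := by
      intro x y
      conv_lhs => rw [hf_eq]
      rw [fderiv_fun_mul (hdu x) (hdv x)]
      simp only [ContinuousLinearMap.add_apply, ContinuousLinearMap.coe_smul',
        Pi.smul_apply, smul_eq_mul]
    -- pointwise identity
    have key : ∀ x, ‖gradient u x‖ ^ 2 = ‖gradient v x‖ ^ 2 * W x ^ 2 +
        ∑ i, fderiv ℝ f x (EuclideanSpace.single i 1) *
          fderiv ℝ W x (EuclideanSpace.single i 1) := by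
      intro x
      rw [aux_norm_grad_sq u x, aux_norm_grad_sq v x, Finset.sum_mul, ← Finset.sum_add_distrib]
      refine Finset.sum_congr rfl fun i _ => ?_
      set e : EuclideanSpace ℝ (Fin N) := EuclideanSpace.single i 1
      rw [kdf x e, kdu x e]
      have hux : u x = v x * W x := by conv_lhs => rw [hu_eq]
      rw [hux]
      ring
    -- integrability
    have hgradc : Continuous (gradient v) := by
      have : Continuous (fderiv ℝ v) := hv.continuous_fderiv (by norm_num)
      exact (InnerProductSpace.toDual ℝ
        (EuclideanSpace ℝ (Fin N))).symm.continuous.comp this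
    have hI1 : Integrable (fun x => ‖gradient v x‖ ^ 2 * W x ^ 2) := by
      refine (((hgradc.norm.pow 2).mul (hW.continuous.pow 2))).integrable_of_hasCompactSupport ?_
      refine (hsuppv.fderiv ℝ).mono (fun x hx => ?_)
      simp only [Function.mem_support] at hx ⊢
      intro h
      apply hx
      have hg : gradient v x = 0 := by simp [gradient, h]
      simp only [Pi.mul_apply, Pi.pow_apply, hg]
      simp
    have hI2 : Integrable (fun x => ∑ i, fderiv ℝ f x (EuclideanSpace.single i 1) *
        fderiv ℝ W x (EuclideanSpace.single i 1)) :=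
      integrable_finset_sum _ (fun i _ => aux_int_summand W f hW hf hsuppf i)
    calc ∫ x, ‖gradient u x‖ ^ 2
        = ∫ x, (‖gradient v x‖ ^ 2 * W x ^ 2 +
            ∑ i, fderiv ℝ f x (EuclideanSpace.single i 1) *
              fderiv ℝ W x (EuclideanSpace.single i 1)) := by
          exact integral_congr_ae (Filter.Eventually.of_forall key)
      _ = (∫ x, ‖gradient v x‖ ^ 2 * W x ^ 2) +
            ∫ x, ∑ i, fderiv ℝ f x (EuclideanSpace.single i 1) *
              fderiv ℝ W x (EuclideanSpace.single i 1) := integral_add hI1 hI2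
      _ = (∫ x, ‖gradient v x‖ ^ 2 * W x ^ 2) + - ∫ x, f x * lap W x := by
          rw [aux_ibp_sum W f hW hf hsuppf]
      _ = (∫ x, (-lap W x / W x) * u x ^ 2) + ∫ x, ‖gradient v x‖ ^ 2 * W x ^ 2 := by
          rw [← integral_neg]
          have : ∀ x, -(f x * lap W x) = (-lap W x / W x) * u x ^ 2 := by
            intro x
            rw [hf_def]
            ring
          rw [integral_congr_ae (Filter.Eventually.of_forall this)]
          ring
  refine ⟨main, fun _ u hu hcs => ?_⟩
  rw [main u hu hcs]
  have : 0 ≤ ∫ x, ‖gradient (fun y => u y / W y) x‖ ^ 2 * W x ^ 2 :=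
    integral_nonneg (fun x => by positivity)
  linarith
end
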